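/- Let C be a finite set of resources with values v : C → ℝ≥0 and total value at least 1, all values less than λ = 6/23. Let B ⊆ C with ∑_{r ∈ C\B} v r < λ. Then ∑_{r∈B} min(v r, 5λ/6) ≥ 1 - 4λ/3. -/
import Mathlib


theorem stmt_9 {ι : Type*} [DecidableEq ι] (C : Finset ι)
    (v : ι → ℝ) (hv0 : ∀ r ∈ C, 0 ≤ v r)
    (hthin : ∀ r ∈ C, v r < 6/23)
    (htotal : 1 ≤ ∑ r ∈ C, v r)
    (B : Finset ι) (hB : B ⊆ C)
    (huncov : ∑ r ∈ C \ B, v r < 6/23) :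
    1 - 4 * (6/23 : ℝ) / 3 ≤ ∑ r ∈ B, min (v r) (5 * (6/23) / 6) := by
  have hcap : (5 * (6/23 : ℝ) / 6) = 5/23 := by norm_num
  rw [hcap]
  classical
  set T := B.filter (fun r => (5/23 : ℝ) ≤ v r) with hT
  have hTB : T ⊆ B := Finset.filter_subset _ _
  by_cases h3 : 3 ≤ T.card
  · have h1 : ∑ r ∈ T, min (v r) (5/23 : ℝ) ≤ ∑ r ∈ B, min (v r) (5/23) := by
      apply Finset.sum_le_sum_of_subset_of_nonneg hTB
      intro i hi _
      exact le_min (hv0 i (hB hi)) (by norm_num)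
    have h2 : ∀ r ∈ T, min (v r) (5/23 : ℝ) = 5/23 := by
      intro r hr
      exact min_eq_right (Finset.mem_filter.mp hr).2
    rw [Finset.sum_congr rfl h2, Finset.sum_const, nsmul_eq_mul] at h1
    have : (3 : ℝ) ≤ T.card := by exact_mod_cast h3
    nlinarith
  · push_neg at h3
    have hcard : (T.card : ℝ) ≤ 2 := by exact_mod_cast Nat.lt_succ_iff.mp h3
    have hsplit : ∑ r ∈ B, min (v r) (5/23 : ℝ)
        = ∑ r ∈ B, v r - ∑ r ∈ T, (v r - 5/23) := by
      rw [hT, Finset.sum_filter, ← Finset.sum_sub_distrib]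
      apply Finset.sum_congr rfl
      intro r hr
      by_cases h : (5/23 : ℝ) ≤ v r
      · simp [h, min_eq_right h]
      · push_neg at h
        simp [h.not_ge, min_eq_left h.le]
    have hloss : ∑ r ∈ T, (v r - 5/23 : ℝ) ≤ T.card * (1/23) := by
      calc ∑ r ∈ T, (v r - 5/23 : ℝ) ≤ ∑ _r ∈ T, (1/23 : ℝ) := by
            apply Finset.sum_le_sum
            intro r hr
            have := hthin r (hB (hTB hr))
            linarith
        _ = T.card * (1/23) := by rw [Finset.sum_const, nsmul_eq_mul]
    have hBsum : ∑ r ∈ C, v r = ∑ r ∈ C \ B, v r + ∑ r ∈ B, v r :=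
      (Finset.sum_sdiff hB).symm
    have : (17/23 : ℝ) < ∑ r ∈ B, v r := by linarith
    rw [hsplit]
    nlinarith
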